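/- If α = (α_⊗, α_⊕) is a medial linear transformation between Frobenius medial linear functors F, G : X → Y (so F_⊗ = F_⊕ = F and G_⊗ = G_⊕ = G), then for every object A, the component α_⊗_A : F(A) → G(A) is a section of α_⊕_A : G(A) → F(A); that is, α_⊗_A; α_⊕_A = 1_{F(A)}. -/
import Mathlib


open CategoryTheory

universe v u

/-- A monoidal structure on a category, given by explicit data. -/
structure MonStr (V : Type u) [Category.{v} V] where
  t : V → V → V
  map : ∀ {X₁ Y₁ X₂ Y₂ : V}, (X₁ ⟶ Y₁) → (X₂ ⟶ Y₂) → (t X₁ X₂ ⟶ t Y₁ Y₂)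
  map_id : ∀ X Y, map (𝟙 X) (𝟙 Y) = 𝟙 (t X Y)
  map_comp : ∀ {X₁ Y₁ Z₁ X₂ Y₂ Z₂ : V} (f₁ : X₁ ⟶ Y₁) (g₁ : Y₁ ⟶ Z₁)
    (f₂ : X₂ ⟶ Y₂) (g₂ : Y₂ ⟶ Z₂),
    map (f₁ ≫ g₁) (f₂ ≫ g₂) = map f₁ f₂ ≫ map g₁ g₂
  e : V
  a : ∀ X Y Z, t (t X Y) Z ≅ t X (t Y Z)
  a_nat : ∀ {X₁ Y₁ X₂ Y₂ X₃ Y₃ : V} (f₁ : X₁ ⟶ Y₁) (f₂ : X₂ ⟶ Y₂) (f₃ : X₃ ⟶ Y₃),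
    map (map f₁ f₂) f₃ ≫ (a Y₁ Y₂ Y₃).hom = (a X₁ X₂ X₃).hom ≫ map f₁ (map f₂ f₃)
  l : ∀ X, t e X ≅ X
  r : ∀ X, t X e ≅ X
  l_nat : ∀ {X Y : V} (f : X ⟶ Y), map (𝟙 e) f ≫ (l Y).hom = (l X).hom ≫ f
  r_nat : ∀ {X Y : V} (f : X ⟶ Y), map f (𝟙 e) ≫ (r Y).hom = (r X).hom ≫ f
  pentagon : ∀ W X Y Z,
    map (a W X Y).hom (𝟙 Z) ≫ (a W (t X Y) Z).hom ≫ map (𝟙 W) (a X Y Z).hom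
      = (a (t W X) Y Z).hom ≫ (a W X (t Y Z)).hom
  triangle : ∀ X Y, (a X e Y).hom ≫ map (𝟙 X) (l Y).hom = map (r X).hom (𝟙 Y)

/-- A symmetric monoidal structure on a category, given by explicit data. -/
structure SymMonStr (V : Type u) [Category.{v} V] extends MonStr V where
  b : ∀ X Y, t X Y ≅ t Y X
  b_nat : ∀ {X₁ Y₁ X₂ Y₂ : V} (f : X₁ ⟶ Y₁) (g : X₂ ⟶ Y₂),
    map f g ≫ (b Y₁ Y₂).hom = (b X₁ X₂).hom ≫ map g f
  symmetry : ∀ X Y, (b X Y).hom ≫ (b Y X).hom = 𝟙 (t X Y)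
  hexagon : ∀ X Y Z,
    (a X Y Z).hom ≫ (b X (t Y Z)).hom ≫ (a Y Z X).hom
      = map (b X Y).hom (𝟙 Z) ≫ (a Y X Z).hom ≫ map (𝟙 Y) (b X Z).hom

/-- The canonical flip `(W ⊗ X) ⊗ (Y ⊗ Z) ⟶ (W ⊗ Y) ⊗ (X ⊗ Z)` of a symmetric
monoidal structure. -/
def SymMonStr.flip {V : Type u} [Category.{v} V] (M : SymMonStr V) (W X Y Z : V) :
    M.t (M.t W X) (M.t Y Z) ⟶ M.t (M.t W Y) (M.t X Z) :=
  (M.a W X (M.t Y Z)).hom ≫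
    M.map (𝟙 W) ((M.a X Y Z).inv ≫ M.map (M.b X Y).hom (𝟙 Z) ≫ (M.a Y X Z).hom) ≫
    (M.a W Y (M.t X Z)).inv

/-- `⟨A, Δ, e⟩` is a comonoid with respect to the monoidal structure `M`. -/
def MonStr.IsComonoid {V : Type u} [Category.{v} V] (M : MonStr V) (A : V)
    (Δ : A ⟶ M.t A A) (e : A ⟶ M.e) : Prop :=
  (Δ ≫ M.map Δ (𝟙 A) ≫ (M.a A A A).hom = Δ ≫ M.map (𝟙 A) Δ) ∧
  (Δ ≫ M.map e (𝟙 A) ≫ (M.l A).hom = 𝟙 A) ∧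
  (Δ ≫ M.map (𝟙 A) e ≫ (M.r A).hom = 𝟙 A)

/-- `⟨A, ∇, u⟩` is a monoid with respect to the monoidal structure `M`. -/
def MonStr.IsMonoid {V : Type u} [Category.{v} V] (M : MonStr V) (A : V)
    (m : M.t A A ⟶ A) (u : M.e ⟶ A) : Prop :=
  (M.map m (𝟙 A) ≫ m = (M.a A A A).hom ≫ M.map (𝟙 A) m ≫ m) ∧
  (M.map u (𝟙 A) ≫ m = (M.l A).hom) ∧
  (M.map (𝟙 A) u ≫ m = (M.r A).hom)
/-- A linearly distributive category structure: a tensor monoidal structure `T`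
(unit `⊤ = T.e`), a par monoidal structure `P` (unit `⊥ = P.e`), and natural
left and right linear distributivities satisfying the coherence conditions
(LDC.1)–(LDC.3). -/
structure LDCStr (V : Type u) [Category.{v} V] where
  T : MonStr V
  P : MonStr V
  δL : ∀ A B X : V, T.t A (P.t B X) ⟶ P.t (T.t A B) X
  δR : ∀ A B X : V, T.t (P.t A B) X ⟶ P.t A (T.t B X)
  δL_nat : ∀ {A A' B B' X X' : V} (f : A ⟶ A') (g : B ⟶ B') (h : X ⟶ X'),
    T.map f (P.map g h) ≫ δL A' B' X' = δL A B X ≫ P.map (T.map f g) h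
  δR_nat : ∀ {A A' B B' X X' : V} (f : A ⟶ A') (g : B ⟶ B') (h : X ⟶ X'),
    T.map (P.map f g) h ≫ δR A' B' X' = δR A B X ≫ P.map f (T.map g h)
  -- (LDC.1)
  unit_δL : ∀ A B, (T.l (P.t A B)).inv ≫ δL T.e A B = P.map (T.l A).inv (𝟙 B)
  unit_δR : ∀ A B, (T.r (P.t A B)).inv ≫ δR A B T.e = P.map (𝟙 A) (T.r B).inv
  counit_δR : ∀ A B, δR P.e A B ≫ (P.l (T.t A B)).hom = T.map (P.l A).hom (𝟙 B)
  counit_δL : ∀ A B, δL A B P.e ≫ (P.r (T.t A B)).hom = T.map (𝟙 A) (P.r B).hom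
  -- (LDC.2)
  assoc_δL : ∀ A B X Y, δL (T.t A B) X Y ≫ P.map (T.a A B X).hom (𝟙 Y)
    = (T.a A B (P.t X Y)).hom ≫ T.map (𝟙 A) (δL B X Y) ≫ δL A (T.t B X) Y
  assoc_δR : ∀ A B X Y, (T.a (P.t A B) X Y).hom ≫ δR A B (T.t X Y)
    = T.map (δR A B X) (𝟙 Y) ≫ δR A (T.t B X) Y ≫ P.map (𝟙 A) (T.a B X Y).hom
  assoc_δL' : ∀ A B X Y, δL A B (P.t X Y) ≫ (P.a (T.t A B) X Y).inv
    = T.map (𝟙 A) (P.a B X Y).inv ≫ δL A (P.t B X) Y ≫ P.map (δL A B X) (𝟙 Y)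
  assoc_δR' : ∀ A B X Y, T.map (P.a A B X).inv (𝟙 Y) ≫ δR (P.t A B) X Y
    = δR A (P.t B X) Y ≫ P.map (𝟙 A) (δR B X Y) ≫ (P.a A B (T.t X Y)).inv
  -- (LDC.3)
  leftright₁ : ∀ A B X Y, δL (P.t A B) X Y ≫ P.map (δR A B X) (𝟙 Y)
    = δR A B (P.t X Y) ≫ P.map (𝟙 A) (δL B X Y) ≫ (P.a A (T.t B X) Y).inv
  leftright₂ : ∀ A B X Y, T.map (δL A B X) (𝟙 Y) ≫ δR (T.t A B) X Y
    = (T.a A (P.t B X) Y).hom ≫ T.map (𝟙 A) (δR B X Y) ≫ δL A B (T.t X Y)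

/-- The mix condition for a linearly distributive category with respect to a map
`m : ⊥ ⟶ ⊤`: the two canonical composites `A ⊗ B ⟶ A ⊕ B` built from `m`, the
unitors, and the linear distributivities agree. -/
def LDCStr.IsMix {V : Type u} [Category.{v} V] (L : LDCStr V)
    (m : L.P.e ⟶ L.T.e) : Prop :=
  ∀ A B : V,
    L.T.map ((L.P.r A).inv ≫ L.P.map (𝟙 A) m) (𝟙 B) ≫ L.δR A L.T.e B ≫
        L.P.map (𝟙 A) (L.T.l B).hom
      = L.T.map (𝟙 A) ((L.P.l B).inv ≫ L.P.map m (𝟙 B)) ≫ L.δL A L.T.e B ≫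
        L.P.map (L.T.r A).hom (𝟙 B)
/-- A symmetric linearly distributive category: an LDC whose tensor and par
structures carry symmetric braidings interacting coherently with the linear
distributivities (condition (SLDC)). -/
structure SLDCStr (V : Type u) [Category.{v} V] where
  L : LDCStr V
  bT : ∀ X Y, L.T.t X Y ≅ L.T.t Y X
  bT_nat : ∀ {X₁ Y₁ X₂ Y₂ : V} (f : X₁ ⟶ Y₁) (g : X₂ ⟶ Y₂),
    L.T.map f g ≫ (bT Y₁ Y₂).hom = (bT X₁ X₂).hom ≫ L.T.map g f
  bT_symmetry : ∀ X Y, (bT X Y).hom ≫ (bT Y X).hom = 𝟙 (L.T.t X Y)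
  bT_hexagon : ∀ X Y Z,
    (L.T.a X Y Z).hom ≫ (bT X (L.T.t Y Z)).hom ≫ (L.T.a Y Z X).hom
      = L.T.map (bT X Y).hom (𝟙 Z) ≫ (L.T.a Y X Z).hom ≫ L.T.map (𝟙 Y) (bT X Z).hom
  bP : ∀ X Y, L.P.t X Y ≅ L.P.t Y X
  bP_nat : ∀ {X₁ Y₁ X₂ Y₂ : V} (f : X₁ ⟶ Y₁) (g : X₂ ⟶ Y₂),
    L.P.map f g ≫ (bP Y₁ Y₂).hom = (bP X₁ X₂).hom ≫ L.P.map g f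
  bP_symmetry : ∀ X Y, (bP X Y).hom ≫ (bP Y X).hom = 𝟙 (L.P.t X Y)
  bP_hexagon : ∀ X Y Z,
    (L.P.a X Y Z).hom ≫ (bP X (L.P.t Y Z)).hom ≫ (L.P.a Y Z X).hom
      = L.P.map (bP X Y).hom (𝟙 Z) ≫ (L.P.a Y X Z).hom ≫ L.P.map (𝟙 Y) (bP X Z).hom
  -- (SLDC): the linear distributivities interact coherently with the braidings
  sldc : ∀ A B X : V,
    L.δR A B X
      = (bT (L.P.t A B) X).hom ≫ L.T.map (𝟙 X) (bP A B).hom ≫ L.δL X B A ≫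
          L.P.map (bT X B).hom (𝟙 A) ≫ (bP (L.T.t B X) A).hom
/-- A symmetric medial linearly distributive category: a symmetric LDC equipped
with ⊥-contraction, ⊤-cocontraction, a nullary mix map, and a natural medial
transformation, satisfying the mix condition, the duoidal axioms (MLDC.2)–(MLDC.4)
for `(V, ⊕, ⊥, ⊗, ⊤)`, the compatibility (MLDC.1) of the medial maps with the
linear distributivities, and the symmetry conditions (BDUO). -/
structure SMLDCStr (V : Type u) [Category.{v} V] where
  S : SLDCStr V
  Δbot : S.L.P.e ⟶ S.L.T.t S.L.P.e S.L.P.e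
  nablaTop : S.L.P.t S.L.T.e S.L.T.e ⟶ S.L.T.e
  m : S.L.P.e ⟶ S.L.T.e
  med : ∀ A B X Y : V,
    S.L.P.t (S.L.T.t A B) (S.L.T.t X Y) ⟶ S.L.T.t (S.L.P.t A X) (S.L.P.t B Y)
  med_nat : ∀ {A A' B B' X X' Y Y' : V} (f : A ⟶ A') (g : B ⟶ B')
      (h : X ⟶ X') (k : Y ⟶ Y'),
    S.L.P.map (S.L.T.map f g) (S.L.T.map h k) ≫ med A' B' X' Y'
      = med A B X Y ≫ S.L.T.map (S.L.P.map f h) (S.L.P.map g k)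
  -- the underlying LDC is mix with respect to `m`
  isMix : S.L.IsMix m
  -- (MLDC.2): `(⊥, Δ_⊥, m)` is a (cocommutative) ⊗-comonoid
  bot_comonoid : S.L.T.IsComonoid S.L.P.e Δbot m
  bot_cocomm : Δbot ≫ (S.bT S.L.P.e S.L.P.e).hom = Δbot
  -- (MLDC.2): `(⊤, ∇_⊤, m)` is a (commutative) ⊕-monoid
  top_monoid : S.L.P.IsMonoid S.L.T.e nablaTop m
  top_comm : (S.bP S.L.T.e S.L.T.e).hom ≫ nablaTop = nablaTop
  -- (MLDC.3): the medial maps interact coherently with the associators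
  med_assoc_T : ∀ A B C D E F : V,
    med (S.L.T.t A B) C (S.L.T.t D E) F ≫
        S.L.T.map (med A B D E) (𝟙 (S.L.P.t C F)) ≫
          (S.L.T.a (S.L.P.t A D) (S.L.P.t B E) (S.L.P.t C F)).hom
      = S.L.P.map (S.L.T.a A B C).hom (S.L.T.a D E F).hom ≫
          med A (S.L.T.t B C) D (S.L.T.t E F) ≫
            S.L.T.map (𝟙 (S.L.P.t A D)) (med B C E F)
  med_assoc_P : ∀ A B C D E F : V,
    (S.L.P.a (S.L.T.t A B) (S.L.T.t C D) (S.L.T.t E F)).inv ≫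
        S.L.P.map (med A B C D) (𝟙 (S.L.T.t E F)) ≫
          med (S.L.P.t A C) (S.L.P.t B D) E F
      = S.L.P.map (𝟙 (S.L.T.t A B)) (med C D E F) ≫
          med A B (S.L.P.t C E) (S.L.P.t D F) ≫
            S.L.T.map (S.L.P.a A C E).inv (S.L.P.a B D F).inv
  -- (MLDC.4): the medial maps interact coherently with the unitors
  med_unit₁ : ∀ A B : V,
    S.L.P.map Δbot (𝟙 (S.L.T.t A B)) ≫ med S.L.P.e S.L.P.e A B ≫
        S.L.T.map (S.L.P.l A).hom (S.L.P.l B).hom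
      = (S.L.P.l (S.L.T.t A B)).hom
  med_unit₂ : ∀ A B : V,
    S.L.P.map (𝟙 (S.L.T.t A B)) Δbot ≫ med A B S.L.P.e S.L.P.e ≫
        S.L.T.map (S.L.P.r A).hom (S.L.P.r B).hom
      = (S.L.P.r (S.L.T.t A B)).hom
  med_unit₃ : ∀ A B : V,
    S.L.P.map (S.L.T.l A).inv (S.L.T.l B).inv ≫ med S.L.T.e A S.L.T.e B ≫
        S.L.T.map nablaTop (𝟙 (S.L.P.t A B))
      = (S.L.T.l (S.L.P.t A B)).inv
  med_unit₄ : ∀ A B : V,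
    S.L.P.map (S.L.T.r A).inv (S.L.T.r B).inv ≫ med A S.L.T.e B S.L.T.e ≫
        S.L.T.map (𝟙 (S.L.P.t A B)) nablaTop
      = (S.L.T.r (S.L.P.t A B)).inv
  -- (MLDC.1): the medial maps interact coherently with the linear distributivities
  med_δR : ∀ A B C D X : V,
    S.L.T.map (med A B C D) (𝟙 X) ≫
        (S.L.T.a (S.L.P.t A C) (S.L.P.t B D) X).hom ≫
          S.L.T.map (𝟙 (S.L.P.t A C)) (S.L.δR B D X)
      = S.L.δR (S.L.T.t A B) (S.L.T.t C D) X ≫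
          S.L.P.map (𝟙 (S.L.T.t A B)) (S.L.T.a C D X).hom ≫
            med A B C (S.L.T.t D X)
  med_δL : ∀ A B C D X : V,
    S.L.T.map (𝟙 X) (med A B C D) ≫
        (S.L.T.a X (S.L.P.t A C) (S.L.P.t B D)).inv ≫
          S.L.T.map (S.L.δL X A C) (𝟙 (S.L.P.t B D))
      = S.L.δL X (S.L.T.t A B) (S.L.T.t C D) ≫
          S.L.P.map (S.L.T.a X A B).inv (𝟙 (S.L.T.t C D)) ≫
            med (S.L.T.t X A) B C D
  med_δR' : ∀ A B C D X : V,
    S.L.P.map (S.L.δR X A B) (𝟙 (S.L.T.t C D)) ≫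
        (S.L.P.a X (S.L.T.t A B) (S.L.T.t C D)).hom ≫
          S.L.P.map (𝟙 X) (med A B C D)
      = med (S.L.P.t X A) B C D ≫
          S.L.T.map (S.L.P.a X A C).hom (𝟙 (S.L.P.t B D)) ≫
            S.L.δR X (S.L.P.t A C) (S.L.P.t B D)
  med_δL' : ∀ A B C D X : V,
    S.L.P.map (𝟙 (S.L.T.t A B)) (S.L.δL C D X) ≫
        (S.L.P.a (S.L.T.t A B) (S.L.T.t C D) X).inv ≫
          S.L.P.map (med A B C D) (𝟙 X)
      = med A B C (S.L.P.t D X) ≫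
          S.L.T.map (𝟙 (S.L.P.t A C)) (S.L.P.a B D X).inv ≫
            S.L.δL (S.L.P.t A C) (S.L.P.t B D) X
  -- (BDUO): the medial maps interact coherently with the braidings
  med_bT : ∀ A B C D : V,
    med A B C D ≫ (S.bT (S.L.P.t A C) (S.L.P.t B D)).hom
      = S.L.P.map (S.bT A B).hom (S.bT C D).hom ≫ med B A D C
  med_bP : ∀ A B C D : V,
    med A B C D ≫ S.L.T.map (S.bP A C).hom (S.bP B D).hom
      = (S.bP (S.L.T.t A B) (S.L.T.t C D)).hom ≫ med C D A B

/-- A medial bimonoid in a symmetric medial linearly distributive category: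
an object `A` with a `⊗`-comonoid structure `⟨A, Δ, e⟩` and a `⊕`-monoid
structure `⟨A, ∇, u⟩` satisfying the four compatibility conditions (MB). -/
def SMLDCStr.IsMedialBimonoid {V : Type u} [Category.{v} V] (M : SMLDCStr V)
    (A : V) (Δ : A ⟶ M.S.L.T.t A A) (e : A ⟶ M.S.L.T.e)
    (n : M.S.L.P.t A A ⟶ A) (u : M.S.L.P.e ⟶ A) : Prop :=
  M.S.L.T.IsComonoid A Δ e ∧
  M.S.L.P.IsMonoid A n u ∧
  (n ≫ Δ = M.S.L.P.map Δ Δ ≫ M.med A A A A ≫ M.S.L.T.map n n) ∧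
  (u ≫ e = M.m) ∧
  (n ≫ e = M.S.L.P.map e e ≫ M.nablaTop) ∧
  (u ≫ Δ = M.Δbot ≫ M.S.L.T.map u u)

/-- A bicommutative medial bimonoid: the comonoid is cocommutative and the
monoid is commutative. -/
def SMLDCStr.IsBicommMedialBimonoid {V : Type u} [Category.{v} V] (M : SMLDCStr V)
    (A : V) (Δ : A ⟶ M.S.L.T.t A A) (e : A ⟶ M.S.L.T.e)
    (n : M.S.L.P.t A A ⟶ A) (u : M.S.L.P.e ⟶ A) : Prop :=
  M.IsMedialBimonoid A Δ e n u ∧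
  (Δ ≫ (M.S.bT A A).hom = Δ) ∧
  ((M.S.bP A A).hom ≫ n = n)

/-- The canonical flip of the symmetric tensor structure of an SMLDC. -/
def SMLDCStr.flipT {V : Type u} [Category.{v} V] (M : SMLDCStr V) (W X Y Z : V) :
    M.S.L.T.t (M.S.L.T.t W X) (M.S.L.T.t Y Z)
      ⟶ M.S.L.T.t (M.S.L.T.t W Y) (M.S.L.T.t X Z) :=
  (M.S.L.T.a W X (M.S.L.T.t Y Z)).hom ≫
    M.S.L.T.map (𝟙 W)
      ((M.S.L.T.a X Y Z).inv ≫ M.S.L.T.map (M.S.bT X Y).hom (𝟙 Z) ≫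
        (M.S.L.T.a Y X Z).hom) ≫
    (M.S.L.T.a W Y (M.S.L.T.t X Z)).inv

variable {V : Type u} [Category.{v} V] {W : Type u} [Category.{v} W]

/-- A Frobenius medial linear functor between symmetric medial linearly
distributive categories: a single functor `F` that is strong symmetric
`⊗`-monoidal and strong symmetric `⊕`-comonoidal, whose linear strengths are
`n_⊕` and `m_⊗`, satisfying the Frobenius, mix, and medial compatibility
conditions. -/
structure FrobMedialFunctor (M : SMLDCStr V) (N : SMLDCStr W) where
  F : V ⥤ W
  mT : N.S.L.T.e ≅ F.obj M.S.L.T.e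
  mt : ∀ A B : V, N.S.L.T.t (F.obj A) (F.obj B) ≅ F.obj (M.S.L.T.t A B)
  nb : F.obj M.S.L.P.e ≅ N.S.L.P.e
  np : ∀ A B : V, F.obj (M.S.L.P.t A B) ≅ N.S.L.P.t (F.obj A) (F.obj B)
  mt_nat : ∀ {A A' B B' : V} (f : A ⟶ A') (g : B ⟶ B'),
    N.S.L.T.map (F.map f) (F.map g) ≫ (mt A' B').hom
      = (mt A B).hom ≫ F.map (M.S.L.T.map f g)
  np_nat : ∀ {A A' B B' : V} (f : A ⟶ A') (g : B ⟶ B'),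
    F.map (M.S.L.P.map f g) ≫ (np A' B').hom
      = (np A B).hom ≫ N.S.L.P.map (F.map f) (F.map g)
  -- strong symmetric ⊗-monoidal structure
  mt_assoc : ∀ A B C : V,
    N.S.L.T.map (mt A B).hom (𝟙 (F.obj C)) ≫ (mt (M.S.L.T.t A B) C).hom ≫
        F.map (M.S.L.T.a A B C).hom
      = (N.S.L.T.a (F.obj A) (F.obj B) (F.obj C)).hom ≫
          N.S.L.T.map (𝟙 (F.obj A)) (mt B C).hom ≫ (mt A (M.S.L.T.t B C)).hom
  mt_lu : ∀ A : V,
    N.S.L.T.map mT.hom (𝟙 (F.obj A)) ≫ (mt M.S.L.T.e A).hom ≫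
        F.map (M.S.L.T.l A).hom = (N.S.L.T.l (F.obj A)).hom
  mt_ru : ∀ A : V,
    N.S.L.T.map (𝟙 (F.obj A)) mT.hom ≫ (mt A M.S.L.T.e).hom ≫
        F.map (M.S.L.T.r A).hom = (N.S.L.T.r (F.obj A)).hom
  mt_braid : ∀ A B : V,
    (mt A B).hom ≫ F.map (M.S.bT A B).hom
      = (N.S.bT (F.obj A) (F.obj B)).hom ≫ (mt B A).hom
  -- strong symmetric ⊕-comonoidal structure
  np_coassoc : ∀ A B C : V,
    F.map (M.S.L.P.a A B C).hom ≫ (np A (M.S.L.P.t B C)).hom ≫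
        N.S.L.P.map (𝟙 (F.obj A)) (np B C).hom
      = (np (M.S.L.P.t A B) C).hom ≫ N.S.L.P.map (np A B).hom (𝟙 (F.obj C)) ≫
          (N.S.L.P.a (F.obj A) (F.obj B) (F.obj C)).hom
  np_lu : ∀ A : V,
    (np M.S.L.P.e A).hom ≫ N.S.L.P.map nb.hom (𝟙 (F.obj A)) ≫
        (N.S.L.P.l (F.obj A)).hom = F.map (M.S.L.P.l A).hom
  np_ru : ∀ A : V,
    (np A M.S.L.P.e).hom ≫ N.S.L.P.map (𝟙 (F.obj A)) nb.hom ≫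
        (N.S.L.P.r (F.obj A)).hom = F.map (M.S.L.P.r A).hom
  np_braid : ∀ A B : V,
    F.map (M.S.bP A B).hom ≫ (np B A).hom
      = (np A B).hom ≫ (N.S.bP (F.obj A) (F.obj B)).hom
  -- Frobenius conditions
  frob_L : ∀ A B X : V,
    N.S.L.T.map (𝟙 (F.obj A)) (np B X).hom ≫
        N.S.L.δL (F.obj A) (F.obj B) (F.obj X) ≫
          N.S.L.P.map (mt A B).hom (𝟙 (F.obj X))
      = (mt A (M.S.L.P.t B X)).hom ≫ F.map (M.S.L.δL A B X) ≫
          (np (M.S.L.T.t A B) X).hom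
  frob_R : ∀ A B X : V,
    N.S.L.T.map (np A B).hom (𝟙 (F.obj X)) ≫
        N.S.L.δR (F.obj A) (F.obj B) (F.obj X) ≫
          N.S.L.P.map (𝟙 (F.obj A)) (mt B X).hom
      = (mt (M.S.L.P.t A B) X).hom ≫ F.map (M.S.L.δR A B X) ≫
          (np A (M.S.L.T.t B X)).hom
  -- mix compatibility (MixFLF)
  mix_compat : nb.hom ≫ N.m ≫ mT.hom = F.map M.m
  -- medial compatibility
  delta_compat : nb.hom ≫ N.Δbot ≫ N.S.L.T.map nb.inv nb.inv ≫
      (mt M.S.L.P.e M.S.L.P.e).hom = F.map M.Δbot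
  nabla_compat : (np M.S.L.T.e M.S.L.T.e).hom ≫ N.S.L.P.map mT.inv mT.inv ≫
      N.nablaTop ≫ mT.hom = F.map M.nablaTop
  med_compat : ∀ A B C D : V,
    F.map (M.med A B C D) ≫ (mt (M.S.L.P.t A C) (M.S.L.P.t B D)).inv ≫
        N.S.L.T.map (np A C).hom (np B D).hom
      = (np (M.S.L.T.t A B) (M.S.L.T.t C D)).hom ≫
          N.S.L.P.map (mt A B).inv (mt C D).inv ≫
            N.med (F.obj A) (F.obj B) (F.obj C) (F.obj D)

/-- If `α = (α_⊗, α_⊕)` is a medial linear transformation between Frobenius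
medial linear functors `F, G : X ⟶ Y`, then each component `α_⊗` is a section of
`α_⊕`: `α_⊗ ≫ α_⊕ = 1_{F(A)}`. -/
theorem medial_linear_transformation_section {M : SMLDCStr V} {N : SMLDCStr W}
    (F G : FrobMedialFunctor M N) (α : F.F ⟶ G.F) (β : G.F ⟶ F.F)
    -- `α_⊗` is a `⊗`-monoidal transformation
    (hαT₁ : F.mT.hom ≫ α.app M.S.L.T.e = G.mT.hom)
    (hαT₂ : ∀ A B : V, N.S.L.T.map (α.app A) (α.app B) ≫ (G.mt A B).hom
      = (F.mt A B).hom ≫ α.app (M.S.L.T.t A B))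
    -- `α_⊗` is a `⊕`-monoidal transformation (for `m_⊥ = n_⊥⁻¹`, `m_⊕ = n_⊕⁻¹`)
    (hαP₁ : F.nb.inv ≫ α.app M.S.L.P.e = G.nb.inv)
    (hαP₂ : ∀ A B : V, N.S.L.P.map (α.app A) (α.app B) ≫ (G.np A B).inv
      = (F.np A B).inv ≫ α.app (M.S.L.P.t A B))
    -- `α_⊕` is a `⊕`-comonoidal transformation
    (hβP₁ : β.app M.S.L.P.e ≫ F.nb.hom = G.nb.hom)
    (hβP₂ : ∀ A B : V, β.app (M.S.L.P.t A B) ≫ (F.np A B).hom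
      = (G.np A B).hom ≫ N.S.L.P.map (β.app A) (β.app B))
    -- `α_⊕` is a `⊗`-comonoidal transformation (for `n_⊤ = m_⊤⁻¹`, `n_⊗ = m_⊗⁻¹`)
    (hβT₁ : β.app M.S.L.T.e ≫ F.mT.inv = G.mT.inv)
    (hβT₂ : ∀ A B : V, β.app (M.S.L.T.t A B) ≫ (F.mt A B).inv
      = (G.mt A B).inv ≫ N.S.L.T.map (β.app A) (β.app B))
    -- the linear transformation conditions (LT) with respect to the linear
    -- strengths `ν^R_⊗ = ν^L_⊗ = n_⊕` and `ν^R_⊕ = ν^L_⊕ = m_⊗`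
    (hLT₁ : ∀ A B : V, α.app (M.S.L.P.t A B) ≫ (G.np A B).hom ≫
        N.S.L.P.map (β.app A) (𝟙 (G.F.obj B))
      = (F.np A B).hom ≫ N.S.L.P.map (𝟙 (F.F.obj A)) (α.app B))
    (hLT₂ : ∀ A B : V, α.app (M.S.L.P.t A B) ≫ (G.np A B).hom ≫
        N.S.L.P.map (𝟙 (G.F.obj A)) (β.app B)
      = (F.np A B).hom ≫ N.S.L.P.map (α.app A) (𝟙 (F.F.obj B)))
    (hLT₃ : ∀ A B : V, N.S.L.T.map (𝟙 (G.F.obj A)) (α.app B) ≫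
        (G.mt A B).hom ≫ β.app (M.S.L.T.t A B)
      = N.S.L.T.map (β.app A) (𝟙 (F.F.obj B)) ≫ (F.mt A B).hom)
    (hLT₄ : ∀ A B : V, N.S.L.T.map (α.app A) (𝟙 (G.F.obj B)) ≫
        (G.mt A B).hom ≫ β.app (M.S.L.T.t A B)
      = N.S.L.T.map (𝟙 (F.F.obj A)) (β.app B) ≫ (F.mt A B).hom) :
    ∀ A : V, α.app A ≫ β.app A = 𝟙 (F.F.obj A) := by
  intro A
  have hnb : α.app M.S.L.P.e ≫ G.nb.hom = F.nb.hom := by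
    have : α.app M.S.L.P.e = F.nb.hom ≫ G.nb.inv := by
      rw [← hαP₁, ← Category.assoc, Iso.hom_inv_id, Category.id_comp]
    rw [this, Category.assoc, Iso.inv_hom_id, Category.comp_id]
  have key := congrArg
    (fun f => f ≫ N.S.L.P.map (𝟙 (F.F.obj A)) G.nb.hom ≫
      (N.S.L.P.r (F.F.obj A)).hom) (hLT₁ A M.S.L.P.e)
  simp only [Category.assoc] at key
  -- simplify the right-hand side of `key`
  have hR : (F.np A M.S.L.P.e).hom ≫ N.S.L.P.map (𝟙 (F.F.obj A)) (α.app M.S.L.P.e) ≫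
      N.S.L.P.map (𝟙 (F.F.obj A)) G.nb.hom ≫ (N.S.L.P.r (F.F.obj A)).hom
      = F.F.map (M.S.L.P.r A).hom := by
    rw [← Category.assoc (N.S.L.P.map _ _), ← N.S.L.P.map_comp, Category.id_comp, hnb]
    exact F.np_ru A
  -- simplify the left-hand side of `key`
  have hswap : N.S.L.P.map (β.app A) (𝟙 (G.F.obj M.S.L.P.e)) ≫
      N.S.L.P.map (𝟙 (F.F.obj A)) G.nb.hom
      = N.S.L.P.map (𝟙 (G.F.obj A)) G.nb.hom ≫ N.S.L.P.map (β.app A) (𝟙 N.S.L.P.e) := by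
    rw [← N.S.L.P.map_comp, ← N.S.L.P.map_comp]
    simp
  have hL : α.app (M.S.L.P.t A M.S.L.P.e) ≫ (G.np A M.S.L.P.e).hom ≫
      N.S.L.P.map (β.app A) (𝟙 (G.F.obj M.S.L.P.e)) ≫
      N.S.L.P.map (𝟙 (F.F.obj A)) G.nb.hom ≫ (N.S.L.P.r (F.F.obj A)).hom
      = F.F.map (M.S.L.P.r A).hom ≫ α.app A ≫ β.app A := by
    rw [← Category.assoc (N.S.L.P.map _ _), hswap, Category.assoc,
      N.S.L.P.r_nat (β.app A)]
    have := G.np_ru A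
    calc α.app (M.S.L.P.t A M.S.L.P.e) ≫ (G.np A M.S.L.P.e).hom ≫
          N.S.L.P.map (𝟙 (G.F.obj A)) G.nb.hom ≫ (N.S.L.P.r (G.F.obj A)).hom ≫ β.app A
        = α.app (M.S.L.P.t A M.S.L.P.e) ≫ ((G.np A M.S.L.P.e).hom ≫
            N.S.L.P.map (𝟙 (G.F.obj A)) G.nb.hom ≫ (N.S.L.P.r (G.F.obj A)).hom) ≫
            β.app A := by simp only [Category.assoc]
      _ = α.app (M.S.L.P.t A M.S.L.P.e) ≫ G.F.map (M.S.L.P.r A).hom ≫ β.app A := by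
            rw [this]
      _ = F.F.map (M.S.L.P.r A).hom ≫ α.app A ≫ β.app A := by
            rw [← Category.assoc, ← α.naturality, Category.assoc]
  rw [hL, hR] at key
  have : IsIso (F.F.map (M.S.L.P.r A).hom) :=
    ⟨F.F.map (M.S.L.P.r A).inv, by rw [← F.F.map_comp, Iso.hom_inv_id, F.F.map_id],
      by rw [← F.F.map_comp, Iso.inv_hom_id, F.F.map_id]⟩
  exact (cancel_epi (F.F.map (M.S.L.P.r A).hom)).mp
    (by rw [Category.comp_id]; exact key)
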